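/- (Per-iteration contraction of AltGDmin under the paper's Temporary Assumption.) Let U* and U be real n×r matrices with orthonormal columns, P := I − U*(U*)ᵀ, δ := ‖P U‖. Let B, B* be real r×q matrices, grad a real n×r matrix, and E := (U B − U* B*) Bᵀ. Let σ_min > 0, κ ≥ 1, σ_max := κ·σ_min, and let constants satisfy 0 < c_η, 0 < c₁ ≤ 0.2, C₂ > 0; set the step size η := c_η/σ_max². Assume: (i) η‖B‖² ≤ 0.9; (ii) λ_min(B Bᵀ) ≥ 0.9·σ_min²; (iii) ‖grad − E‖ ≤ c₁·δ·σ_min²; (iv) ‖E‖ ≤ C₂·κ²·δ·σ_min²; (v) (2C₂κ² + 2c₁)·δ ≤ 0.1; (vi) 0 < δ < 1/2; (vii) η(‖E‖ + ‖grad − E‖) < 1/2. Then, if U − η·grad = U⁺ R⁺ is a QR decomposition with U⁺ having orthonormal columns and R⁺ invertible, ‖(I − U*(U*)ᵀ) U⁺‖ ≤ (1 − (0.8 − c₁)·c_η/κ²)·δ. -/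

import Mathlib

open Matrix
open scoped RealInnerProductSpace

/-- Spectral norm (operator norm induced by the Euclidean norm) of a real matrix. -/
noncomputable def specNorm {m n : ℕ} (M : Matrix (Fin m) (Fin n) ℝ) : ℝ :=
  ‖LinearMap.toContinuousLinearMap (Matrix.toEuclideanLin M)‖

/-- Smallest eigenvalue of a (symmetric) square matrix, via the Rayleigh quotient:
minimum of `⟪x, M x⟫` over unit vectors `x`. -/
noncomputable def lambdaMin {n : ℕ} (M : Matrix (Fin n) (Fin n) ℝ) : ℝ :=
  ⨅ x : Metric.sphere (0 : EuclideanSpace ℝ (Fin n)) 1,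
    ⟪(x : EuclideanSpace ℝ (Fin n)),
      Matrix.toEuclideanLin M (x : EuclideanSpace ℝ (Fin n))⟫

namespace AltAux

noncomputable def T {m n : ℕ} (M : Matrix (Fin m) (Fin n) ℝ) :
    EuclideanSpace ℝ (Fin n) →L[ℝ] EuclideanSpace ℝ (Fin m) :=
  LinearMap.toContinuousLinearMap (Matrix.toEuclideanLin M)

lemma T_mul {m n p : ℕ} (A : Matrix (Fin m) (Fin n) ℝ) (B : Matrix (Fin n) (Fin p) ℝ)
    (x : EuclideanSpace ℝ (Fin p)) : T (A*B) x = T A (T B x) := by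
  show Matrix.toEuclideanLin (A*B) x = Matrix.toEuclideanLin A (Matrix.toEuclideanLin B x)
  ext i
  simp [Matrix.toEuclideanLin_apply, Matrix.mulVec_mulVec]

lemma T_one {n : ℕ} (x : EuclideanSpace ℝ (Fin n)) : T (1 : Matrix (Fin n) (Fin n) ℝ) x = x := by
  show Matrix.toEuclideanLin 1 x = x
  ext i; simp [Matrix.toEuclideanLin_apply]

lemma T_sub {m n : ℕ} (A B : Matrix (Fin m) (Fin n) ℝ) (x : EuclideanSpace ℝ (Fin n)) :
    T (A - B) x = T A x - T B x := by
  show Matrix.toEuclideanLin (A-B) x = _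
  rw [map_sub]; rfl

lemma T_smul {m n : ℕ} (c : ℝ) (A : Matrix (Fin m) (Fin n) ℝ) (x : EuclideanSpace ℝ (Fin n)) :
    T (c • A) x = c • T A x := by
  show Matrix.toEuclideanLin (c • A) x = _
  rw [_root_.map_smul]; rfl

lemma inner_T {m n : ℕ} (M : Matrix (Fin m) (Fin n) ℝ) (x : EuclideanSpace ℝ (Fin m))
    (y : EuclideanSpace ℝ (Fin n)) : ⟪x, T M y⟫ = ⟪T Mᵀ x, y⟫ := by
  show ⟪x, Matrix.toEuclideanLin M y⟫ = ⟪Matrix.toEuclideanLin Mᵀ x, y⟫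
  simp only [Matrix.toEuclideanLin_apply, PiLp.inner_apply, RCLike.inner_apply, conj_trivial]
  simp only [Matrix.mulVec, dotProduct, Matrix.transpose_apply,
    Finset.mul_sum, Finset.sum_mul]
  rw [Finset.sum_comm]
  exact Finset.sum_congr rfl fun j _ => Finset.sum_congr rfl fun i _ => by ring

lemma norm_T_le {m n : ℕ} (M : Matrix (Fin m) (Fin n) ℝ) (x : EuclideanSpace ℝ (Fin n)) :
    ‖T M x‖ ≤ specNorm M * ‖x‖ := (T M).le_opNorm x

lemma specNorm_le {m n : ℕ} (M : Matrix (Fin m) (Fin n) ℝ) {c : ℝ} (hc : 0 ≤ c)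
    (h : ∀ x, ‖T M x‖ ≤ c * ‖x‖) : specNorm M ≤ c :=
  (T M).opNorm_le_bound hc h

lemma specNorm_nonneg {m n : ℕ} (M : Matrix (Fin m) (Fin n) ℝ) : 0 ≤ specNorm M :=
  norm_nonneg _

lemma norm_T_of_orth {m n : ℕ} {U : Matrix (Fin m) (Fin n) ℝ} (hU : Uᵀ * U = 1)
    (x : EuclideanSpace ℝ (Fin n)) : ‖T U x‖ = ‖x‖ := by
  have h : ⟪T U x, T U x⟫ = ⟪x, x⟫ := by
    rw [real_inner_comm, inner_T, ← T_mul, hU, T_one]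
  have h' : ‖T U x‖^2 = ‖x‖^2 := by
    rw [← real_inner_self_eq_norm_sq, ← real_inner_self_eq_norm_sq]; exact h
  nlinarith [norm_nonneg (T U x), norm_nonneg x]

lemma specNorm_transpose_le {m n : ℕ} (M : Matrix (Fin m) (Fin n) ℝ) :
    specNorm Mᵀ ≤ specNorm M := by
  apply specNorm_le _ (specNorm_nonneg M)
  intro x
  rcases eq_or_ne (T Mᵀ x) 0 with h | h
  · simp [h]; exact mul_nonneg (specNorm_nonneg M) (norm_nonneg x)
  have h1 : ‖T Mᵀ x‖^2 = ⟪x, T M (T Mᵀ x)⟫ := by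
    rw [← real_inner_self_eq_norm_sq, ← inner_T]
  have h2 : ⟪x, T M (T Mᵀ x)⟫ ≤ ‖x‖ * (specNorm M * ‖T Mᵀ x‖) :=
    le_trans (real_inner_le_norm _ _) (by
      have := norm_T_le M (T Mᵀ x); nlinarith [norm_nonneg x])
  have h3 : 0 < ‖T Mᵀ x‖ := norm_pos_iff.mpr h
  nlinarith

lemma key_M {r q : ℕ} (B : Matrix (Fin r) (Fin q) ℝ) (η lam : ℝ) (hη : 0 ≤ η)
    (hB : η * specNorm B ^ 2 ≤ 0.9)
    (hlam : ∀ x : EuclideanSpace ℝ (Fin r), lam * ‖x‖^2 ≤ ⟪x, T (B*Bᵀ) x⟫)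
    (hlam9 : η * lam ≤ 0.9) :
    ∀ v, ‖T ((1 : Matrix (Fin r) (Fin r) ℝ) - η • (B*Bᵀ)) v‖ ≤ (1 - η*lam) * ‖v‖ := by
  set Mm := (1 : Matrix (Fin r) (Fin r) ℝ) - η • (B*Bᵀ) with hMm
  have hMsym : Mmᵀ = Mm := by
    simp [hMm, Matrix.transpose_sub, Matrix.transpose_smul, Matrix.transpose_mul]
  have hsymm : ∀ a b, ⟪a, T Mm b⟫ = ⟪b, T Mm a⟫ := by
    intro a b
    rw [inner_T, hMsym, real_inner_comm]
  have hTapp : ∀ x, T Mm x = x - η • T (B*Bᵀ) x := fun x => by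
    rw [hMm, T_sub, T_smul, T_one]
  have hBt : ∀ x, ⟪x, T (B*Bᵀ) x⟫ = ‖T Bᵀ x‖^2 := fun x => by
    rw [T_mul, inner_T, real_inner_self_eq_norm_sq]
  have hgxx_ub : ∀ x, ⟪x, T Mm x⟫ ≤ (1-η*lam)*‖x‖^2 := by
    intro x
    rw [hTapp, inner_sub_right, real_inner_smul_right, real_inner_self_eq_norm_sq]
    have := hlam x; nlinarith [sq_nonneg ‖x‖]
  have hgxx_lb : ∀ x, 0 ≤ ⟪x, T Mm x⟫ := by
    intro x
    rw [hTapp, inner_sub_right, real_inner_smul_right, real_inner_self_eq_norm_sq, hBt]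
    have h1 : ‖T Bᵀ x‖ ≤ specNorm Bᵀ * ‖x‖ := norm_T_le _ _
    have h2 : specNorm Bᵀ ≤ specNorm B := specNorm_transpose_le B
    have h3 := specNorm_nonneg Bᵀ
    have h5 := norm_nonneg x
    have h6 := norm_nonneg (T Bᵀ x)
    have h1' : ‖T Bᵀ x‖ ≤ specNorm B * ‖x‖ := h1.trans (by nlinarith)
    have e1 : ‖T Bᵀ x‖^2 ≤ specNorm B^2 * ‖x‖^2 := by
      nlinarith [mul_le_mul h1' h1' h6 (mul_nonneg (specNorm_nonneg B) h5)]
    nlinarith [sq_nonneg ‖x‖, mul_le_mul_of_nonneg_left e1 hη]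
  have hCS : ∀ x y, ⟪x, T Mm y⟫^2 ≤ ⟪x, T Mm x⟫ * ⟪y, T Mm y⟫ := by
    intro x y
    have hq : ∀ t : ℝ, 0 ≤ ⟪y, T Mm y⟫ * (t*t) + (2*⟪x, T Mm y⟫)*t + ⟪x, T Mm x⟫ := by
      intro t
      have h0 := hgxx_lb (x + t • y)
      rw [map_add, _root_.map_smul] at h0
      rw [inner_add_left, inner_add_right, inner_add_right, real_inner_smul_left,
        real_inner_smul_left, real_inner_smul_right, real_inner_smul_right] at h0
      have hs := hsymm x y
      have heq : ⟪y, T Mm y⟫ * (t*t) + (2*⟪x, T Mm y⟫)*t + ⟪x, T Mm x⟫ =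
          ⟪x, T Mm x⟫ + t * ⟪x, T Mm y⟫ + (t * ⟪y, T Mm x⟫ + t * (t * ⟪y, T Mm y⟫)) := by
        rw [hs]; ring
      linarith [h0, heq]
    have hd := discrim_le_zero hq
    rw [discrim] at hd
    nlinarith [hd]
  intro v
  have hc : (0.1:ℝ) ≤ 1 - η*lam := by linarith
  rcases eq_or_ne (T Mm v) 0 with hv | hv
  · rw [hv]
    simp only [norm_zero]
    have := norm_nonneg v
    nlinarith
  · have h5 : 0 < ‖T Mm v‖ := norm_pos_iff.mpr hv
    have h1 : ‖T Mm v‖^2 = ⟪v, T Mm (T Mm v)⟫ := by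
      rw [← real_inner_self_eq_norm_sq, hsymm]
    have h2 := hCS v (T Mm v)
    have h3 := hgxx_ub v
    have h4 := hgxx_ub (T Mm v)
    have h6 := hgxx_lb v
    have h7 := hgxx_lb (T Mm v)
    have hnv := norm_nonneg v
    have e1 : ‖T Mm v‖^4 ≤ (1-η*lam)^2 * ‖v‖^2 * ‖T Mm v‖^2 := by nlinarith
    have e2 : ‖T Mm v‖^2 ≤ ((1-η*lam) * ‖v‖)^2 := by
      have hp : (0:ℝ) < ‖T Mm v‖^2 := by positivity
      have e1' : ‖T Mm v‖^2 * ‖T Mm v‖^2 ≤ ((1-η*lam)*‖v‖)^2 * ‖T Mm v‖^2 := by nlinarith [e1]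
      exact le_of_mul_le_mul_right e1' hp
    exact le_of_pow_le_pow_left₀ two_ne_zero (mul_nonneg (by linarith) hnv) e2

lemma inner_T_BBt {r q : ℕ} (B : Matrix (Fin r) (Fin q) ℝ) (x : EuclideanSpace ℝ (Fin r)) :
    ⟪x, T (B * Bᵀ) x⟫ = ‖T Bᵀ x‖^2 := by
  rw [T_mul, inner_T, real_inner_self_eq_norm_sq]

lemma lambdaMin_le_of_unit {r q : ℕ} (B : Matrix (Fin r) (Fin q) ℝ)
    (x : EuclideanSpace ℝ (Fin r)) (hx : ‖x‖ = 1) :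
    lambdaMin (B * Bᵀ) ≤ ‖T Bᵀ x‖^2 := by
  have hmem : x ∈ Metric.sphere (0 : EuclideanSpace ℝ (Fin r)) 1 := by
    simp [Metric.mem_sphere, dist_zero_right, hx]
  have hbdd : BddBelow (Set.range fun y : Metric.sphere (0 : EuclideanSpace ℝ (Fin r)) 1 =>
      ⟪(y : EuclideanSpace ℝ (Fin r)),
        Matrix.toEuclideanLin (B * Bᵀ) (y : EuclideanSpace ℝ (Fin r))⟫) := by
    refine ⟨0, ?_⟩
    rintro v ⟨y, rfl⟩
    show (0:ℝ) ≤ ⟪(y : EuclideanSpace ℝ (Fin r)), T (B * Bᵀ) (y : EuclideanSpace ℝ (Fin r))⟫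
    rw [inner_T_BBt]
    positivity
  have h := ciInf_le hbdd (⟨x, hmem⟩ : Metric.sphere (0 : EuclideanSpace ℝ (Fin r)) 1)
  rw [show ⟪x, Matrix.toEuclideanLin (B * Bᵀ) x⟫ = ‖T Bᵀ x‖^2 from inner_T_BBt B x] at h
  exact h

lemma lambdaMin_rzero (M : Matrix (Fin 0) (Fin 0) ℝ) : lambdaMin M = 0 := by
  have : IsEmpty (Metric.sphere (0 : EuclideanSpace ℝ (Fin 0)) 1) := by
    constructor
    rintro ⟨x, hx⟩
    have hx0 : x = 0 := Subsingleton.elim x 0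
    rw [Metric.mem_sphere, hx0, dist_self] at hx
    norm_num at hx
  exact Real.iInf_of_isEmpty _

end AltAux

open AltAux

set_option maxHeartbeats 4000000 in
/-- per-iteration contraction of AltGDmin under the paper's
Temporary Assumption. -/
theorem altGDmin_contraction (n r q : ℕ)
    (Ustar U : Matrix (Fin n) (Fin r) ℝ)
    (hU : Uᵀ * U = 1) (hUs : Ustarᵀ * Ustar = 1)
    (B Bstar : Matrix (Fin r) (Fin q) ℝ)
    (grad : Matrix (Fin n) (Fin r) ℝ)
    (P : Matrix (Fin n) (Fin n) ℝ)
    (hP : P = (1 : Matrix (Fin n) (Fin n) ℝ) - Ustar * Ustarᵀ)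
    (δ : ℝ) (hδdef : δ = specNorm (P * U))
    (E : Matrix (Fin n) (Fin r) ℝ) (hE : E = (U * B - Ustar * Bstar) * Bᵀ)
    (σmin κ σmax c_η c₁ C₂ η : ℝ)
    (hσ : 0 < σmin) (hκ : 1 ≤ κ) (hσmax : σmax = κ * σmin)
    (hcη : 0 < c_η) (hc₁ : 0 < c₁) (hc₁' : c₁ ≤ 0.2) (hC₂ : 0 < C₂)
    (hηdef : η = c_η / σmax ^ 2)
    (h1 : η * specNorm B ^ 2 ≤ 0.9)
    (h2 : lambdaMin (B * Bᵀ) ≥ 0.9 * σmin ^ 2)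
    (h3 : specNorm (grad - E) ≤ c₁ * δ * σmin ^ 2)
    (h4 : specNorm E ≤ C₂ * κ ^ 2 * δ * σmin ^ 2)
    (h5 : (2 * C₂ * κ ^ 2 + 2 * c₁) * δ ≤ 0.1)
    (h6 : 0 < δ) (h6' : δ < 1 / 2)
    (h7 : η * (specNorm E + specNorm (grad - E)) < 1 / 2) :
    ∀ (Uplus : Matrix (Fin n) (Fin r) ℝ) (Rplus : Matrix (Fin r) (Fin r) ℝ),
      U - η • grad = Uplus * Rplus → Uplusᵀ * Uplus = 1 → IsUnit Rplus →
      specNorm (((1 : Matrix (Fin n) (Fin n) ℝ) - Ustar * Ustarᵀ) * Uplus) ≤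
        (1 - (0.8 - c₁) * c_η / κ ^ 2) * δ := by
  intro Uplus Rplus hQR hUplusOrth hRunit
  have hκ0 : (0:ℝ) < κ := lt_of_lt_of_le one_pos hκ
  have hσmax0 : (0:ℝ) < σmax := by rw [hσmax]; positivity
  have hη0 : (0:ℝ) < η := by rw [hηdef]; positivity
  -- r must be positive
  rcases Nat.eq_zero_or_pos r with hr0 | hr
  · exfalso
    subst hr0
    rw [lambdaMin_rzero] at h2
    have hpos : (0:ℝ) < 0.9 * σmin ^ 2 := by positivity
    linarith only [h2, hpos]
  -- pointwise lower bound from lambdaMin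
  have hlam : ∀ x : EuclideanSpace ℝ (Fin r), 0.9*σmin^2 * ‖x‖^2 ≤ ⟪x, T (B*Bᵀ) x⟫ := by
    intro x
    rw [inner_T_BBt]
    rcases eq_or_ne x 0 with rfl | hx
    · simp
    · have hn : 0 < ‖x‖ := norm_pos_iff.mpr hx
      set u : EuclideanSpace ℝ (Fin r) := ‖x‖⁻¹ • x with hu
      have hun : ‖u‖ = 1 := by
        rw [hu, norm_smul, Real.norm_eq_abs, abs_of_pos (inv_pos.mpr hn), inv_mul_cancel₀ hn.ne']
      have h2' : 0.9*σmin^2 ≤ ‖T Bᵀ u‖^2 := le_trans h2 (lambdaMin_le_of_unit B u hun)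
      have hscale : T Bᵀ x = ‖x‖ • T Bᵀ u := by
        rw [hu, _root_.map_smul, smul_smul, mul_inv_cancel₀ hn.ne', one_smul]
      rw [hscale, norm_smul, Real.norm_eq_abs, abs_of_pos hn]
      nlinarith [hn, sq_nonneg ‖T Bᵀ u‖, h2', sq_nonneg (‖x‖*‖T Bᵀ u‖)]
  -- d := η σmin² ≤ 1
  obtain ⟨x₀, hx₀⟩ : ∃ x : EuclideanSpace ℝ (Fin r), ‖x‖ = 1 :=
    ⟨EuclideanSpace.single ⟨0, hr⟩ (1:ℝ), by rw [EuclideanSpace.norm_single]; norm_num⟩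
  have hlamB : 0.9*σmin^2 ≤ specNorm B^2 := by
    have ha1 := hlam x₀
    rw [inner_T_BBt, hx₀] at ha1
    have ha2 : ‖T Bᵀ x₀‖ ≤ specNorm B := by
      have := norm_T_le Bᵀ x₀
      rw [hx₀, mul_one] at this
      exact this.trans (specNorm_transpose_le B)
    have ha3 : ‖T Bᵀ x₀‖^2 ≤ specNorm B^2 := pow_le_pow_left₀ (norm_nonneg _) ha2 2
    norm_num at ha1
    linarith only [ha1, ha3]
  have hd1 : η * σmin^2 ≤ 1 := by
    have key : η*(0.9*σmin^2) ≤ η * specNorm B^2 := mul_le_mul_of_nonneg_left hlamB hη0.le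
    have key2 : η*(0.9*σmin^2) = 0.9*(η*σmin^2) := by ring
    have key3 : η * specNorm B^2 = η * specNorm B^2 := rfl
    nlinarith [key, key2, h1]
  have hd9 : η * (0.9*σmin^2) ≤ 0.9 := by nlinarith [hd1]
  -- key operator bound
  have hkey := key_M B η (0.9*σmin^2) hη0.le h1 hlam hd9
  -- P facts
  have hPUstar : P * Ustar = 0 := by
    rw [hP, Matrix.sub_mul, Matrix.one_mul, Matrix.mul_assoc, hUs, Matrix.mul_one, sub_self]
  have hPT : Pᵀ = P := by
    rw [hP, Matrix.transpose_sub, Matrix.transpose_one, Matrix.transpose_mul,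
      Matrix.transpose_transpose]
  have hPP : P * P = P := by
    nth_rewrite 2 [hP]
    rw [Matrix.mul_sub, Matrix.mul_one, ← Matrix.mul_assoc, hPUstar, Matrix.zero_mul, sub_zero]
  have hPle : ∀ v, ‖T P v‖ ≤ ‖v‖ := by
    intro v
    rcases eq_or_ne (T P v) 0 with hv | hv
    · rw [hv, norm_zero]; exact norm_nonneg v
    · have hp : 0 < ‖T P v‖ := norm_pos_iff.mpr hv
      have e1 : ‖T P v‖^2 = ⟪v, T P v⟫ := by
        rw [← real_inner_self_eq_norm_sq]
        have e2 := inner_T P v (T P v)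
        rw [hPT] at e2
        rw [← e2, ← T_mul, hPP]
      have e3 : ⟪v, T P v⟫ ≤ ‖v‖ * ‖T P v‖ := real_inner_le_norm _ _
      nlinarith
  -- key matrix identity
  have hPE : P * E = P * U * (B * Bᵀ) := by
    rw [hE, ← Matrix.mul_assoc, Matrix.mul_sub, ← Matrix.mul_assoc, ← Matrix.mul_assoc,
      hPUstar, Matrix.zero_mul, sub_zero, Matrix.mul_assoc]
  have hid : P * (U - η • grad) =
      (P * U) * ((1 : Matrix (Fin r) (Fin r) ℝ) - η • (B * Bᵀ)) - η • (P * (grad - E)) := by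
    rw [Matrix.mul_sub P U, Matrix.mul_smul]
    rw [Matrix.mul_sub (P*U), Matrix.mul_one, Matrix.mul_smul, ← hPE]
    rw [Matrix.mul_sub P grad E, smul_sub]
    abel
  -- bound on the numerator
  set bnum : ℝ := (1 - η*(0.9*σmin^2)) * δ + η * (c₁ * δ * σmin^2) with hbnum
  have hδnn : 0 ≤ δ := h6.le
  have hbnum_nn : 0 ≤ bnum := by
    rw [hbnum]
    have t1 : (0:ℝ) ≤ 1 - η*(0.9*σmin^2) := by linarith only [hd9]
    have t2 : (0:ℝ) ≤ η * (c₁ * δ * σmin^2) := by positivity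
    have t3 := mul_nonneg t1 hδnn
    linarith only [t2, t3]
  have hb1 : specNorm (P * (U - η • grad)) ≤ bnum := by
    apply specNorm_le _ hbnum_nn
    intro v
    rw [hid]
    have e0 : T ((P * U) * ((1 : Matrix (Fin r) (Fin r) ℝ) - η • (B * Bᵀ)) - η • (P * (grad - E))) v
        = T ((P * U) * ((1 : Matrix (Fin r) (Fin r) ℝ) - η • (B * Bᵀ))) v
          - η • T (P * (grad - E)) v := by
      rw [T_sub, T_smul]
    rw [e0]
    have e1 : ‖T ((P * U) * ((1 : Matrix (Fin r) (Fin r) ℝ) - η • (B * Bᵀ))) v‖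
        ≤ δ * ((1 - η*(0.9*σmin^2)) * ‖v‖) := by
      rw [T_mul]
      calc ‖T (P*U) (T ((1 : Matrix (Fin r) (Fin r) ℝ) - η • (B * Bᵀ)) v)‖
          ≤ specNorm (P*U) * ‖T ((1 : Matrix (Fin r) (Fin r) ℝ) - η • (B * Bᵀ)) v‖ :=
            norm_T_le _ _
        _ ≤ δ * ((1 - η*(0.9*σmin^2)) * ‖v‖) := by
            rw [hδdef]
            exact mul_le_mul_of_nonneg_left (hkey v) (specNorm_nonneg _)
    have e2 : ‖T (P * (grad - E)) v‖ ≤ c₁ * δ * σmin^2 * ‖v‖ := by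
      rw [T_mul]
      calc ‖T P (T (grad - E) v)‖ ≤ ‖T (grad - E) v‖ := hPle _
        _ ≤ specNorm (grad - E) * ‖v‖ := norm_T_le _ _
        _ ≤ c₁ * δ * σmin^2 * ‖v‖ := mul_le_mul_of_nonneg_right h3 (norm_nonneg v)
    calc ‖T ((P * U) * ((1 : Matrix (Fin r) (Fin r) ℝ) - η • (B * Bᵀ))) v
          - η • T (P * (grad - E)) v‖
        ≤ ‖T ((P * U) * ((1 : Matrix (Fin r) (Fin r) ℝ) - η • (B * Bᵀ))) v‖
          + ‖η • T (P * (grad - E)) v‖ := norm_sub_le _ _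
      _ ≤ δ * ((1 - η*(0.9*σmin^2)) * ‖v‖) + η * (c₁ * δ * σmin^2 * ‖v‖) := by
          rw [norm_smul, Real.norm_eq_abs, abs_of_pos hη0]
          exact add_le_add e1 (mul_le_mul_of_nonneg_left e2 hη0.le)
      _ = bnum * ‖v‖ := by rw [hbnum]; ring
  -- lower bound on singular values of U - η grad
  obtain ⟨G, hG⟩ : ∃ G : ℝ, G = specNorm E + specNorm (grad - E) := ⟨_, rfl⟩
  have hGnn : 0 ≤ G := hG ▸ add_nonneg (specNorm_nonneg _) (specNorm_nonneg _)
  have ha : (1:ℝ)/2 < 1 - η*G := by rw [hG]; linarith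
  have hgradle : ∀ v, ‖T grad v‖ ≤ G * ‖v‖ := by
    intro v
    have hgE : T grad v - T E v = T (grad - E) v := (T_sub _ _ _).symm
    have t1 : ‖T grad v‖ ≤ ‖T E v‖ + ‖T grad v - T E v‖ := by
      have := norm_sub_le (T grad v - T E v) (- T E v)
      simp only [sub_neg_eq_add, sub_add_cancel, norm_neg] at this
      linarith [this]
    rw [hgE] at t1
    have t2 := norm_T_le E v
    have t3 := norm_T_le (grad - E) v
    rw [hG]
    nlinarith [norm_nonneg v]
  have hlow : ∀ v, (1 - η*G) * ‖v‖ ≤ ‖T (U - η • grad) v‖ := by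
    intro v
    have e1 : T (U - η • grad) v = T U v - η • T grad v := by rw [T_sub, T_smul]
    have e2 : ‖T U v‖ - ‖η • T grad v‖ ≤ ‖T U v - η • T grad v‖ := norm_sub_norm_le _ _
    rw [norm_T_of_orth hU, norm_smul, Real.norm_eq_abs, abs_of_pos hη0] at e2
    have e3 := hgradle v
    rw [e1]
    nlinarith [norm_nonneg v]
  -- bound on specNorm (P * Uplus)
  obtain ⟨u, hu⟩ := hRunit
  have hRR' : Rplus * (↑u⁻¹ : Matrix (Fin r) (Fin r) ℝ) = 1 := by
    rw [← hu]; exact u.mul_inv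
  have hfin : specNorm (P * Uplus) ≤ bnum / (1 - η*G) := by
    apply specNorm_le _ (div_nonneg hbnum_nn (by linarith))
    intro y
    set x : EuclideanSpace ℝ (Fin r) := T (↑u⁻¹ : Matrix (Fin r) (Fin r) ℝ) y with hx
    have hyx : T Rplus x = y := by
      rw [hx, ← T_mul, hRR', T_one]
    have e0 : T (P * Uplus) y = T (P * (U - η • grad)) x := by
      conv_lhs => rw [← hyx, ← T_mul, Matrix.mul_assoc, ← hQR]
    have e1 : ‖T (P * Uplus) y‖ ≤ bnum * ‖x‖ := by
      rw [e0]
      exact (norm_T_le _ _).trans (mul_le_mul_of_nonneg_right hb1 (norm_nonneg x))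
    have e2 : (1 - η*G) * ‖x‖ ≤ ‖y‖ := by
      have := hlow x
      rw [hQR, T_mul, norm_T_of_orth hUplusOrth, hyx] at this
      exact this
    rw [div_mul_eq_mul_div, le_div_iff₀ (by linarith : (0:ℝ) < 1 - η*G)]
    calc ‖T (P * Uplus) y‖ * (1 - η*G) ≤ (bnum * ‖x‖) * (1 - η*G) :=
          mul_le_mul_of_nonneg_right e1 (by linarith)
      _ = bnum * ((1 - η*G) * ‖x‖) := by ring
      _ ≤ bnum * ‖y‖ := mul_le_mul_of_nonneg_left e2 hbnum_nn
  -- final arithmetic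
  have harith : bnum / (1 - η*G) ≤ (1 - (0.8 - c₁) * c_η / κ ^ 2) * δ := by
    set d : ℝ := η * σmin^2 with hdd
    have hdpos : 0 < d := by positivity
    have hdeq : c_η/κ^2 = d := by
      rw [hdd, hηdef, hσmax]
      field_simp
    have hrw : (0.8 - c₁) * c_η / κ ^ 2 = (0.8 - c₁) * d := by
      rw [mul_div_assoc, hdeq]
    have hGub : η*G ≤ 0.05*d := by
      have t1 : G ≤ (C₂*κ^2 + c₁) * (δ * σmin^2) := by rw [hG]; nlinarith
      have t2 : (C₂*κ^2 + c₁) * δ ≤ 0.05 := by nlinarith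
      have t3 : η*G ≤ η * ((C₂*κ^2 + c₁) * (δ * σmin^2)) :=
        mul_le_mul_of_nonneg_left t1 hη0.le
      have t4 : η * ((C₂*κ^2 + c₁) * (δ * σmin^2)) = ((C₂*κ^2 + c₁) * δ) * d := by
        rw [hdd]; ring
      nlinarith
    rw [hrw, div_le_iff₀ (by linarith : (0:ℝ) < 1 - η*G)]
    have hb : bnum = (1 - 0.9*d) * δ + c₁ * δ * d := by rw [hbnum, hdd]; ring
    rw [hb]
    have hcoef : (0:ℝ) < 1 - (0.8 - c₁)*d := by nlinarith
    have step : (1 - (0.8 - c₁)*d) * δ * (1 - 0.05*d) ≤ (1 - (0.8 - c₁)*d) * δ * (1 - η*G) := by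
      apply mul_le_mul_of_nonneg_left (by linarith) (by positivity)
    nlinarith [mul_nonneg (mul_nonneg hδnn hdpos.le) hdpos.le,
      mul_nonneg hδnn hdpos.le]
  calc specNorm (((1 : Matrix (Fin n) (Fin n) ℝ) - Ustar * Ustarᵀ) * Uplus)
      = specNorm (P * Uplus) := by rw [hP]
    _ ≤ bnum / (1 - η*G) := hfin
    _ ≤ (1 - (0.8 - c₁) * c_η / κ ^ 2) * δ := harith
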